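/- If f has a strong fractional Mellin derivative g = s-Θ_c^α f of order α > 0 in X_c (i.e. ‖Δ_h^{α,c} f/(h−1)^α − g‖_{X_c} → 0 as h → 1), then for s = c+it, M[s-Θ_c^α f](s) = (−it)^α M[f](s). -/

import Mathlib

open MeasureTheory Set Filter

noncomputable def gbinom (α : ℝ) (j : ℕ) : ℝ :=
  (∏ i ∈ Finset.range j, (α - i)) / (Nat.factorial j)

noncomputable def mellinCoef (α : ℝ) (j : ℕ) : ℂ :=
  (gbinom α j : ℂ) * (-1 : ℂ) ^ ((α : ℂ) - (j : ℂ))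

noncomputable def mellinDiff (α c h : ℝ) (f : ℝ → ℂ) (x : ℝ) : ℂ :=
  ∑' j : ℕ, mellinCoef α j * ((((h : ℝ) ^ j) ^ c : ℝ) : ℂ) * f ((h : ℝ) ^ j * x)

def memXc (c : ℝ) (f : ℝ → ℂ) : Prop :=
  IntegrableOn (fun x : ℝ => x ^ (c - 1) * ‖f x‖) (Set.Ioi 0)

noncomputable def mellinT (f : ℝ → ℂ) (s : ℂ) : ℂ :=
  ∫ u in Set.Ioi (0 : ℝ), (u : ℂ) ^ (s - 1) * f u

lemma gbinom_succ (α : ℝ) (j : ℕ) :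
    gbinom α (j + 1) = gbinom α j * ((α - j) / (j + 1)) := by
  unfold gbinom
  rw [Finset.prod_range_succ, Nat.factorial_succ]
  push_cast
  rw [div_mul_div_comm, mul_comm ((j:ℝ)+1)]

lemma summable_abs_gbinom {α : ℝ} (hα : 0 < α) :
    Summable (fun j => |gbinom α j|) := by
  set n0 := ⌈α⌉₊ with hn0
  rw [← summable_nat_add_iff n0]
  apply summable_of_sum_range_le (c := (n0 : ℝ) * |gbinom α n0| / α)
    (fun n => abs_nonneg _)
  intro n
  have key : ∀ j : ℕ, α ≤ (j : ℝ) →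
      α * |gbinom α j| = j * |gbinom α j| - ((j : ℝ) + 1) * |gbinom α (j + 1)| := by
    intro j hj
    have h1 : |gbinom α (j + 1)| = |gbinom α j| * (((j : ℝ) - α) / (j + 1)) := by
      rw [gbinom_succ, abs_mul, abs_div, abs_of_nonpos (by linarith : α - (j : ℝ) ≤ 0),
        abs_of_pos (by positivity : (0 : ℝ) < (j : ℝ) + 1), neg_sub]
    rw [h1]
    have h2 : ((j : ℝ) + 1) ≠ 0 := by positivity
    field_simp
    ring
  have hsum : α * ∑ k ∈ Finset.range n, |gbinom α (k + n0)| =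
      ∑ k ∈ Finset.range n,
        ((((k + n0 : ℕ) : ℝ)) * |gbinom α (k + n0)| -
          (((k + 1 + n0 : ℕ) : ℝ)) * |gbinom α (k + 1 + n0)|) := by
    rw [Finset.mul_sum]
    refine Finset.sum_congr rfl fun k _ => ?_
    have hj : α ≤ ((k + n0 : ℕ) : ℝ) := by
      calc α ≤ (n0 : ℝ) := Nat.le_ceil α
      _ ≤ ((k + n0 : ℕ) : ℝ) := by exact_mod_cast Nat.le_add_left _ _
    have := key (k + n0) hj
    rw [this]
    congr 1 <;> push_cast <;> ring_nf
  have htel := Finset.sum_range_sub' (f := fun k => (((k + n0 : ℕ) : ℝ)) * |gbinom α (k + n0)|) n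
  have hb : α * ∑ k ∈ Finset.range n, |gbinom α (k + n0)| ≤ (n0 : ℝ) * |gbinom α n0| := by
    rw [hsum]
    calc ∑ k ∈ Finset.range n,
        ((((k + n0 : ℕ) : ℝ)) * |gbinom α (k + n0)| -
          (((k + 1 + n0 : ℕ) : ℝ)) * |gbinom α (k + 1 + n0)|)
        = (((0 + n0 : ℕ) : ℝ)) * |gbinom α (0 + n0)| -
          (((n + n0 : ℕ) : ℝ)) * |gbinom α (n + n0)| := htel
      _ ≤ (n0 : ℝ) * |gbinom α n0| := by
          simp only [Nat.zero_add]
          have : (0:ℝ) ≤ (((n + n0 : ℕ) : ℝ)) * |gbinom α (n + n0)| := by positivity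
          linarith
  rw [le_div_iff₀ hα]
  linarith [hb]

lemma neg_one_cpow_sub (α : ℝ) (j : ℕ) :
    (-1 : ℂ) ^ ((α : ℂ) - (j : ℂ)) =
      Complex.exp (Real.pi * α * Complex.I) * (-1 : ℂ) ^ j := by
  rw [Complex.cpow_def_of_ne_zero (by norm_num), Complex.log_neg_one]
  have : (Real.pi : ℂ) * Complex.I * ((α : ℂ) - (j : ℂ)) =
      (Real.pi : ℝ) * (α : ℂ) * Complex.I + (j : ℕ) * (-((Real.pi : ℂ) * Complex.I)) := by
    push_cast; ring
  rw [this, Complex.exp_add, Complex.exp_nat_mul, Complex.exp_neg, Complex.exp_pi_mul_I]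
  norm_num

lemma mellinCoef_eq (α : ℝ) (j : ℕ) :
    mellinCoef α j =
      (gbinom α j : ℂ) * Complex.exp (Real.pi * α * Complex.I) * (-1 : ℂ) ^ j := by
  unfold mellinCoef
  rw [neg_one_cpow_sub]; ring

lemma abs_mellinCoef (α : ℝ) (j : ℕ) : ‖mellinCoef α j‖ = |gbinom α j| := by
  rw [mellinCoef_eq, norm_mul, norm_mul]
  have h1 : ‖(Complex.exp (Real.pi * α * Complex.I))‖ = 1 := by
    rw [Complex.norm_exp]
    have : ((Real.pi : ℂ) * (α : ℂ) * Complex.I).re = 0 := by simp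
    rw [this, Real.exp_zero]
  have h2 : ‖((-1 : ℂ) ^ j)‖ = 1 := by
    rw [norm_pow]; simp
  rw [h1, h2, Complex.norm_real, Real.norm_eq_abs]; ring

lemma one_add_mem_slitPlane {w : ℂ} (hw : ‖w‖ < 1) : 1 + w ∈ Complex.slitPlane := by
  rw [Complex.mem_slitPlane_iff]
  left
  have := Complex.abs_re_le_norm w
  have : |w.re| ≤ ‖w‖ := this
  simp only [Complex.add_re, Complex.one_re]
  cases abs_le.mp this with
  | intro h1 h2 => linarith

lemma diffOn_one_add_cpow (β : ℂ) :
    DifferentiableOn ℂ (fun z : ℂ => (1 + z) ^ β) (Metric.ball 0 1) := by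
  intro z hz
  rw [Metric.mem_ball, dist_zero_right] at hz
  exact (((hasDerivAt_id z).const_add (1:ℂ)).cpow_const
    (one_add_mem_slitPlane hz)).differentiableAt.differentiableWithinAt

lemma iteratedDeriv_one_add_cpow (β : ℂ) :
    ∀ n : ℕ, ∀ w ∈ Metric.ball (0 : ℂ) 1,
      iteratedDeriv n (fun z : ℂ => (1 + z) ^ β) w =
        (∏ i ∈ Finset.range n, (β - i)) * (1 + w) ^ (β - n) := by
  intro n
  induction n with
  | zero => intro w _; simp
  | succ n ih =>
    intro w hw
    rw [iteratedDeriv_succ]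
    have hev : iteratedDeriv n (fun z : ℂ => (1 + z) ^ β) =ᶠ[nhds w]
        fun z => (∏ i ∈ Finset.range n, (β - i)) * (1 + z) ^ (β - n) :=
      Filter.eventuallyEq_of_mem (Metric.isOpen_ball.mem_nhds hw) (fun z hz => ih z hz)
    rw [hev.deriv_eq]
    rw [Metric.mem_ball, dist_zero_right] at hw
    have hd : HasDerivAt (fun z : ℂ => (∏ i ∈ Finset.range n, (β - i)) * (1 + z) ^ (β - n))
        ((∏ i ∈ Finset.range n, (β - i)) * ((β - n) * (1 + w) ^ (β - n - 1) * 1)) w := by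
      exact (((hasDerivAt_id w).const_add (1:ℂ)).cpow_const
        (one_add_mem_slitPlane hw)).const_mul _
    rw [hd.deriv, Finset.prod_range_succ]
    have : β - (n + 1 : ℕ) = β - n - 1 := by push_cast; ring
    rw [this]
    ring

lemma hasSum_binomial {α : ℝ} {w : ℂ} (hw : ‖w‖ < 1) :
    HasSum (fun j : ℕ => (gbinom α j : ℂ) * w ^ j) ((1 + w) ^ (α : ℂ)) := by
  have hw' : w ∈ Metric.ball (0 : ℂ) 1 := by
    rw [Metric.mem_ball, dist_zero_right]; exact hw
  have H := Complex.hasSum_taylorSeries_on_ball (diffOn_one_add_cpow (α : ℂ)) hw'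
  have h0 : (0 : ℂ) ∈ Metric.ball (0 : ℂ) 1 := by simp
  simp only [sub_zero, smul_eq_mul] at H
  have H2 : ((1 : ℂ) + w) ^ (α : ℂ) = ∑' n : ℕ, (gbinom α n : ℂ) * w ^ n := by
    rw [← H.tsum_eq]
    congr 1
    funext n
    rw [iteratedDeriv_one_add_cpow (α : ℂ) n 0 h0]
    rw [add_zero, Complex.one_cpow]
    have : ((gbinom α n : ℝ) : ℂ) = (∏ i ∈ Finset.range n, ((α : ℂ) - i)) / (Nat.factorial n : ℂ) := by
      unfold gbinom
      push_cast
      rfl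
    rw [this]
    field_simp
  rw [show ((1 + w) ^ (α : ℂ)) = ∑' n : ℕ, (gbinom α n : ℂ) * w ^ n from H2]
  apply Summable.hasSum
  exact H.summable.congr (fun n => by
    rw [iteratedDeriv_one_add_cpow (α : ℂ) n 0 h0, add_zero, Complex.one_cpow]
    unfold gbinom
    push_cast
    field_simp)

noncomputable def PhiF (α : ℝ) (z : ℂ) : ℂ := ∑' j : ℕ, mellinCoef α j * z ^ j

noncomputable def Ecst (α : ℝ) : ℂ := Complex.exp (Real.pi * α * Complex.I)

lemma Ecst_ne_zero (α : ℝ) : Ecst α ≠ 0 := Complex.exp_ne_zero _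

lemma PhiF_eq_of_lt {α : ℝ} {z : ℂ} (hz : ‖z‖ < 1) :
    PhiF α z = Ecst α * (1 - z) ^ (α : ℂ) := by
  unfold PhiF Ecst
  have h1 : ∀ j : ℕ, mellinCoef α j * z ^ j =
      Complex.exp (Real.pi * α * Complex.I) * ((gbinom α j : ℂ) * (-z) ^ j) := by
    intro j
    rw [mellinCoef_eq, neg_pow]
    ring
  rw [tsum_congr h1, tsum_mul_left]
  have h2 : ‖-z‖ < 1 := by rwa [norm_neg]
  rw [(hasSum_binomial h2).tsum_eq, sub_eq_add_neg]

lemma continuousOn_PhiF {α : ℝ} (hα : 0 < α) :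
    ContinuousOn (PhiF α) (Metric.closedBall (0 : ℂ) 1) := by
  rw [continuousOn_iff_continuous_restrict]
  apply continuous_tsum (f := fun j (z : Metric.closedBall (0:ℂ) 1) => mellinCoef α j * (z : ℂ) ^ j)
    (u := fun j => |gbinom α j|)
  · intro j
    exact (continuous_const.mul ((continuous_subtype_val).pow j))
  · exact summable_abs_gbinom hα
  · intro j z
    have hz : ‖(z : ℂ)‖ ≤ 1 := by
      have := z.2
      rwa [Metric.mem_closedBall, dist_zero_right] at this
    rw [norm_mul, norm_pow]
    calc ‖mellinCoef α j‖ * ‖(z:ℂ)‖ ^ j ≤ ‖mellinCoef α j‖ * 1 := by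
          apply mul_le_mul_of_nonneg_left (pow_le_one₀ (norm_nonneg _) hz) (norm_nonneg _)
      _ = |gbinom α j| := by
          rw [mul_one, abs_mellinCoef]

lemma one_sub_mem_slitPlane {z : ℂ} (hz : ‖z‖ ≤ 1) (hz1 : z ≠ 1) :
    1 - z ∈ Complex.slitPlane := by
  rw [Complex.mem_slitPlane_iff]
  by_cases him : z.im = 0
  · left
    have hre : |z.re| ≤ 1 := by
      have := Complex.abs_re_le_norm z
      linarith [this, hz]
    have hne : z.re ≠ 1 := by
      intro h
      apply hz1
      apply Complex.ext <;> simp [h, him]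
    simp only [Complex.sub_re, Complex.one_re]
    cases abs_le.mp hre with
    | intro h1 h2 => cases lt_or_eq_of_le h2 with
      | inl h => linarith
      | inr h => exact absurd h hne
  · right
    simp only [Complex.sub_im, Complex.one_im, zero_sub, ne_eq, neg_eq_zero]
    exact him

lemma PhiF_eq {α : ℝ} (hα : 0 < α) {z : ℂ} (hz : ‖z‖ ≤ 1) :
    PhiF α z = Ecst α * (1 - z) ^ (α : ℂ) := by
  rcases lt_or_eq_of_le hz with hlt | heq
  · exact PhiF_eq_of_lt hlt
  -- boundary case via radial limits
  have hzb : z ∈ Metric.closedBall (0 : ℂ) 1 := by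
    rw [Metric.mem_closedBall, dist_zero_right]; exact hz
  have hev : ∀ᶠ r : ℝ in nhdsWithin 1 (Set.Iio 1), r ∈ Set.Ioo (0:ℝ) 1 :=
    Ioo_mem_nhdsLT_of_mem (by constructor <;> norm_num : (1:ℝ) ∈ Set.Ioc (0:ℝ) 1)
  have hpath : Tendsto (fun r : ℝ => (r : ℂ) * z) (nhdsWithin 1 (Set.Iio 1))
      (nhdsWithin z (Metric.closedBall (0:ℂ) 1)) := by
    rw [tendsto_nhdsWithin_iff]
    constructor
    · have : Tendsto (fun r : ℝ => (r : ℂ) * z) (nhds 1) (nhds ((1 : ℂ) * z)) :=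
        (Complex.continuous_ofReal.tendsto 1).mul tendsto_const_nhds
      rw [one_mul] at this
      exact this.mono_left nhdsWithin_le_nhds
    · filter_upwards [hev] with r hr
      rw [Metric.mem_closedBall, dist_zero_right, norm_mul, Complex.norm_real,
        Real.norm_eq_abs, abs_of_pos hr.1]
      calc r * ‖z‖ ≤ 1 * 1 := by
            apply mul_le_mul hr.2.le hz (norm_nonneg _) zero_le_one
        _ = 1 := by norm_num
  have hlim1 : Tendsto (fun r : ℝ => PhiF α ((r : ℂ) * z)) (nhdsWithin 1 (Set.Iio 1))
      (nhds (PhiF α z)) :=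
    ((continuousOn_PhiF hα z hzb).tendsto).comp hpath
  have heq2 : ∀ᶠ r : ℝ in nhdsWithin 1 (Set.Iio 1),
      PhiF α ((r : ℂ) * z) = Ecst α * (1 - (r : ℂ) * z) ^ (α : ℂ) := by
    filter_upwards [hev] with r hr
    apply PhiF_eq_of_lt
    rw [norm_mul, Complex.norm_real, Real.norm_eq_abs, abs_of_pos hr.1, ← heq]
    calc r * ‖z‖ < 1 * ‖z‖ := by
          apply mul_lt_mul_of_pos_right hr.2 (by rw [heq]; norm_num)
      _ = ‖z‖ := one_mul _
  have hlim2 : Tendsto (fun r : ℝ => Ecst α * (1 - (r : ℂ) * z) ^ (α : ℂ))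
      (nhdsWithin 1 (Set.Iio 1)) (nhds (Ecst α * (1 - z) ^ (α : ℂ))) := by
    by_cases hz1 : z = 1
    · subst hz1
      have hre : ∀ᶠ r : ℝ in nhdsWithin 1 (Set.Iio 1),
          Ecst α * (1 - (r : ℂ) * 1) ^ (α : ℂ) = Ecst α * (((1 - r) ^ α : ℝ) : ℂ) := by
        filter_upwards [hev] with r hr
        congr 1
        rw [mul_one, show (1 : ℂ) - (r:ℂ) = (((1 - r : ℝ)) : ℂ) by push_cast; ring]
        rw [← Complex.ofReal_cpow (by linarith [hr.2] : (0:ℝ) ≤ 1 - r)]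
      rw [show (1 : ℂ) - 1 = 0 by ring]
      rw [Complex.zero_cpow (by exact_mod_cast hα.ne' : (α : ℂ) ≠ 0), mul_zero]
      apply Tendsto.congr' (Filter.EventuallyEq.symm hre)
      have h0 : Tendsto (fun r : ℝ => (1 - r) ^ α) (nhdsWithin 1 (Set.Iio 1)) (nhds 0) := by
        have hcont : ContinuousAt (fun x : ℝ => x ^ α) 0 :=
          Real.continuousAt_rpow_const 0 α (Or.inr hα.le)
        have h1 : Tendsto (fun r : ℝ => 1 - r) (nhdsWithin 1 (Set.Iio 1)) (nhds 0) := by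
          have h2 : Tendsto (fun r : ℝ => 1 - r) (nhds 1) (nhds ((1:ℝ) - 1)) :=
            tendsto_const_nhds.sub tendsto_id
          norm_num at h2
          exact h2.mono_left nhdsWithin_le_nhds
        have := hcont.tendsto.comp h1
        rwa [Real.zero_rpow hα.ne'] at this
      have : Tendsto (fun r : ℝ => Ecst α * (((1 - r) ^ α : ℝ) : ℂ))
          (nhdsWithin 1 (Set.Iio 1)) (nhds (Ecst α * ((0:ℝ):ℂ))) :=
        tendsto_const_nhds.mul ((Complex.continuous_ofReal.tendsto 0).comp h0)
      simpa using this
    · apply Tendsto.const_mul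
      have hbase : Tendsto (fun r : ℝ => 1 - (r : ℂ) * z) (nhdsWithin 1 (Set.Iio 1))
          (nhds (1 - z)) := by
        have : Tendsto (fun r : ℝ => 1 - (r : ℂ) * z) (nhds 1) (nhds (1 - (1:ℂ) * z)) :=
          tendsto_const_nhds.sub ((Complex.continuous_ofReal.tendsto 1).mul tendsto_const_nhds)
        rw [one_mul] at this
        exact this.mono_left nhdsWithin_le_nhds
      exact (continuousAt_cpow_const (one_sub_mem_slitPlane hz hz1)).tendsto.comp hbase
  exact tendsto_nhds_unique hlim1 (hlim2.congr' (Filter.EventuallyEq.symm heq2))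

lemma integrableOn_cpow_mul {c : ℝ} (t : ℝ) (φ : ℝ → ℂ) (hmeas : Measurable φ)
    (hφ : memXc c φ) :
    IntegrableOn (fun x : ℝ => (x : ℂ) ^ ((c : ℂ) + (t : ℂ) * Complex.I - 1) * φ x)
      (Set.Ioi 0) := by
  have key := mellin_convergent_iff_norm (E := ℂ) (f := φ) (T := Set.Ioi 0)
      (s := (c : ℂ) + (t : ℂ) * Complex.I) subset_rfl measurableSet_Ioi
      hmeas.aestronglyMeasurable.restrict
  have h2 : IntegrableOn
      (fun x : ℝ => x ^ (((c : ℂ) + (t : ℂ) * Complex.I).re - 1) * ‖φ x‖) (Set.Ioi 0) := by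
    have hs : ((c : ℂ) + (t : ℂ) * Complex.I).re = c := by simp
    rw [hs]
    exact hφ
  have := key.mpr h2
  simpa [smul_eq_mul] using this

lemma memXc_comp_mul_left {c : ℝ} {f : ℝ → ℂ} (hf : memXc c f) {a : ℝ} (ha : 0 < a) :
    memXc c (fun x => f (a * x)) := by
  unfold memXc at *
  have h1 : IntegrableOn (fun x : ℝ => (a * x) ^ (c - 1) * ‖f (a * x)‖)
      (Set.Ioi 0) := by
    have := (integrableOn_Ioi_comp_mul_left_iff
      (fun x : ℝ => x ^ (c - 1) * ‖f x‖) 0 ha).mpr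
    rw [mul_zero] at this
    exact this hf
  have h2 : IntegrableOn
      (fun x : ℝ => a ^ (c - 1) * (x ^ (c - 1) * ‖f (a * x)‖)) (Set.Ioi 0) := by
    apply IntegrableOn.congr_fun h1 ?_ measurableSet_Ioi
    intro x hx
    dsimp only
    rw [Real.mul_rpow ha.le (le_of_lt hx)]
    ring
  have h3 := h2.const_mul (a ^ (1 - c))
  apply IntegrableOn.congr_fun h3 ?_ measurableSet_Ioi
  intro x hx
  dsimp only
  have hc : a ^ (1 - c) * a ^ (c - 1) = 1 := by
    rw [← Real.rpow_add ha]; norm_num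
  calc a ^ (1 - c) * (a ^ (c - 1) * (x ^ (c - 1) * ‖f (a * x)‖))
      = a ^ (1 - c) * a ^ (c - 1) * (x ^ (c - 1) * ‖f (a * x)‖) := by ring
    _ = x ^ (c - 1) * ‖f (a * x)‖ := by rw [hc, one_mul]

lemma integral_weight_comp {c : ℝ} (f : ℝ → ℂ) {a : ℝ} (ha : 0 < a) :
    ∫ x in Set.Ioi (0 : ℝ), x ^ (c - 1) * ‖f (a * x)‖ =
      a ^ (-c) * ∫ x in Set.Ioi (0 : ℝ), x ^ (c - 1) * ‖f x‖ := by
  have h0 := integral_comp_mul_left_Ioi (fun x : ℝ => x ^ (c - 1) * ‖f x‖) 0 ha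
  rw [mul_zero] at h0
  have h1 : ∫ x in Set.Ioi (0 : ℝ), (a * x) ^ (c - 1) * ‖f (a * x)‖ =
      a ^ (c - 1) * ∫ x in Set.Ioi (0 : ℝ), x ^ (c - 1) * ‖f (a * x)‖ := by
    rw [← MeasureTheory.integral_const_mul]
    apply setIntegral_congr_fun measurableSet_Ioi
    intro x hx
    dsimp only
    rw [Real.mul_rpow ha.le (le_of_lt hx)]
    ring
  simp only [smul_eq_mul] at h0
  rw [h1] at h0
  have ha' : a ^ (c - 1) ≠ 0 := by positivity
  have hX : ∫ x in Set.Ioi (0 : ℝ), x ^ (c - 1) * ‖f (a * x)‖ =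
      (a⁻¹ * ∫ x in Set.Ioi (0 : ℝ), x ^ (c - 1) * ‖f x‖) / a ^ (c - 1) :=
    eq_div_of_mul_eq ha' (by rw [mul_comm]; exact h0)
  have key : a ^ (-c : ℝ) = a⁻¹ / a ^ (c - 1) := by
    rw [div_eq_mul_inv, ← Real.rpow_neg_one a, ← Real.rpow_neg ha.le, ← Real.rpow_add ha]
    congr 1
    ring
  rw [hX, key]
  ring

lemma integrable_tsum_osin {β : Type*} [MeasurableSpace β] {μ : Measure β}
    {F : ℕ → β → ℂ} (hF_int : ∀ i, Integrable (F i) μ)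
    (hF_sum : Summable fun i => ∫ a, ‖F i a‖ ∂μ) :
    Integrable (fun a => ∑' i, F i a) μ := by
  have hf'' : ∀ i, AEMeasurable (fun x => (‖F i x‖₊ : ENNReal)) μ :=
    fun i => (hF_int i).1.aemeasurable.nnnorm.coe_nnreal_ennreal
  have h1 : ∀ i, ∫⁻ a, (‖F i a‖₊ : ENNReal) ∂μ = ENNReal.ofReal (∫ a, ‖F i a‖ ∂μ) := by
    intro i
    rw [MeasureTheory.lintegral_coe_eq_integral (fun a => ‖F i a‖₊)
      (by simpa only [coe_nnnorm] using (hF_int i).norm)]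
    simp only [coe_nnnorm]
  have hlint : ∑' i, ∫⁻ a, (‖F i a‖₊ : ENNReal) ∂μ ≠ ⊤ := by
    rw [show (∑' i, ∫⁻ a, (‖F i a‖₊ : ENNReal) ∂μ)
        = ∑' i, ENNReal.ofReal (∫ a, ‖F i a‖ ∂μ) from tsum_congr h1,
      ← ENNReal.ofReal_tsum_of_nonneg (fun i => integral_nonneg fun a => norm_nonneg _) hF_sum]
    exact ENNReal.ofReal_ne_top
  have hhh : ∀ᵐ a ∂μ, Summable fun n => (‖F n a‖₊ : ℝ) := by
    rw [← MeasureTheory.lintegral_tsum hf''] at hlint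
    refine (MeasureTheory.ae_lt_top' (AEMeasurable.ennreal_tsum hf'') hlint).mono ?_
    intro x hx
    rw [← ENNReal.tsum_coe_ne_top_iff_summable_coe]
    exact hx.ne
  have hmeas : AEStronglyMeasurable (fun a => ∑' i, F i a) μ := by
    have hps : ∀ n : ℕ, AEStronglyMeasurable (fun a => ∑ i ∈ Finset.range n, F i a) μ :=
      fun n => Finset.aestronglyMeasurable_fun_sum _ (fun i _ => (hF_int i).1)
    apply aestronglyMeasurable_of_tendsto_ae atTop hps
    filter_upwards [hhh] with a ha
    have hsummable : Summable (fun n => F n a) := by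
      apply Summable.of_norm
      simpa [coe_nnnorm] using ha
    exact hsummable.hasSum.tendsto_sum_nat
  refine ⟨hmeas, ?_⟩
  show (∫⁻ a, (‖∑' i, F i a‖₊ : ENNReal) ∂μ) < ⊤
  calc ∫⁻ a, (‖∑' i, F i a‖₊ : ENNReal) ∂μ
      ≤ ∫⁻ a, ∑' i, (‖F i a‖₊ : ENNReal) ∂μ := by
        apply MeasureTheory.lintegral_mono_ae
        filter_upwards [hhh] with a ha
        have hs : Summable (fun n => ‖F n a‖₊) := NNReal.summable_coe.mp ha
        calc (‖∑' i, F i a‖₊ : ENNReal) ≤ ((∑' i, ‖F i a‖₊ : NNReal) : ENNReal) := by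
              exact_mod_cast nnnorm_tsum_le hs
          _ = ∑' i, (‖F i a‖₊ : ENNReal) := ENNReal.coe_tsum hs
    _ = ∑' i, ∫⁻ a, ‖F i a‖₊ ∂μ := MeasureTheory.lintegral_tsum hf''
    _ < ⊤ := hlint.lt_top

lemma mellinT_mellinDiff {α c : ℝ} (hα : 0 < α) (f : ℝ → ℂ) (hmeasf : Measurable f)
    (hf : memXc c f) {h : ℝ} (hh : 0 < h) (t : ℝ) :
    mellinT (mellinDiff α c h f) ((c : ℂ) + (t : ℂ) * Complex.I)
        = PhiF α (Complex.exp (((-(t * Real.log h) : ℝ) : ℂ) * Complex.I)) *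
            mellinT f ((c : ℂ) + (t : ℂ) * Complex.I) ∧
      IntegrableOn (fun x : ℝ => (x : ℂ) ^ ((c : ℂ) + (t : ℂ) * Complex.I - 1) *
        mellinDiff α c h f x) (Set.Ioi 0) := by
  have hα' : (α : ℂ) ≠ 0 := by exact_mod_cast hα.ne'
  set s : ℂ := (c : ℂ) + (t : ℂ) * Complex.I with hsdef
  set z : ℂ := Complex.exp (((-(t * Real.log h) : ℝ) : ℂ) * Complex.I) with hzdef
  set K : ℝ := ∫ x in Set.Ioi (0 : ℝ), x ^ (c - 1) * ‖f x‖ with hKdef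
  set F : ℕ → ℝ → ℂ := fun j x =>
    mellinCoef α j * (((h ^ j) ^ c : ℝ) : ℂ) * ((x : ℂ) ^ (s - 1) * f (h ^ j * x)) with hFdef
  have haj : ∀ j : ℕ, 0 < h ^ j := fun j => pow_pos hh j
  have hfd : ∀ j : ℕ, Measurable (fun x : ℝ => f (h ^ j * x)) :=
    fun j => hmeasf.comp (measurable_const.mul measurable_id)
  have hint : ∀ j, Integrable (F j) (volume.restrict (Set.Ioi 0)) := by
    intro j
    apply Integrable.const_mul
    exact integrableOn_cpow_mul t _ (hfd j) (memXc_comp_mul_left hf (haj j))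
  have hre : (s - 1).re = c - 1 := by rw [hsdef]; simp
  have hnorm : ∀ j, (∫ x, ‖F j x‖ ∂(volume.restrict (Set.Ioi 0))) =
      (|gbinom α j| * (h ^ j) ^ c) * ((h ^ j) ^ (-c) * K) := by
    intro j
    have heq : ∀ x ∈ Set.Ioi (0 : ℝ), ‖F j x‖ =
        (|gbinom α j| * (h ^ j) ^ c) * (x ^ (c - 1) * ‖f (h ^ j * x)‖) := by
      intro x hx
      rw [hFdef]
      dsimp only
      rw [norm_mul, norm_mul, norm_mul, abs_mellinCoef, Complex.norm_real, Real.norm_eq_abs,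
        Complex.norm_cpow_eq_rpow_re_of_pos hx, hre,
        abs_of_nonneg (Real.rpow_nonneg (haj j).le c)]
      try ring
    rw [show (∫ x, ‖F j x‖ ∂(volume.restrict (Set.Ioi 0)))
        = ∫ x in Set.Ioi (0:ℝ), (|gbinom α j| * (h ^ j) ^ c) *
            (x ^ (c - 1) * ‖f (h ^ j * x)‖) from
      setIntegral_congr_fun measurableSet_Ioi heq]
    rw [MeasureTheory.integral_const_mul, integral_weight_comp f (haj j)]
  have hsum : Summable (fun j => ∫ x, ‖F j x‖ ∂(volume.restrict (Set.Ioi 0))) := by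
    apply ((summable_abs_gbinom hα).mul_right K).congr
    intro j
    rw [hnorm j]
    have hbb : (h ^ j) ^ c * (h ^ j) ^ (-c : ℝ) = 1 := by
      rw [← Real.rpow_add (haj j)]
      norm_num
    calc |gbinom α j| * K
        = ((h ^ j) ^ c * (h ^ j) ^ (-c : ℝ)) * (|gbinom α j| * K) := by rw [hbb, one_mul]
      _ = (|gbinom α j| * (h ^ j) ^ c) * ((h ^ j) ^ (-c : ℝ) * K) := by ring
  have hsum' := hsum
  have hfub := MeasureTheory.integral_tsum_of_summable_integral_norm hint hsum
  have hpt : ∀ x : ℝ, (x : ℂ) ^ (s - 1) * mellinDiff α c h f x = ∑' j, F j x := by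
    intro x
    unfold mellinDiff
    rw [← tsum_mul_left]
    exact tsum_congr fun j => by rw [hFdef]; dsimp only; ring
  have hterm : ∀ j, (∫ x : ℝ, F j x ∂(volume.restrict (Set.Ioi 0))) =
      mellinCoef α j * z ^ j * mellinT f s := by
    intro j
    rw [hFdef]
    dsimp only
    rw [MeasureTheory.integral_const_mul]
    have hmel : (∫ x : ℝ, (x : ℂ) ^ (s - 1) * f (h ^ j * x) ∂(volume.restrict (Set.Ioi 0))) =
        ((h ^ j : ℝ) : ℂ) ^ (-s) * mellinT f s := by
      have hm := mellin_comp_mul_left (E := ℂ) f s (haj j)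
      simpa [mellin, smul_eq_mul, mellinT] using hm
    rw [hmel]
    have hb0 : ((h ^ j : ℝ) : ℂ) ≠ 0 := by
      exact_mod_cast (haj j).ne'
    have hz : (((h ^ j) ^ c : ℝ) : ℂ) * ((h ^ j : ℝ) : ℂ) ^ (-s) = z ^ j := by
      rw [Complex.ofReal_cpow (haj j).le c, ← Complex.cpow_add _ _ hb0]
      rw [show (c : ℂ) + -s = ((-t : ℝ) : ℂ) * Complex.I by rw [hsdef]; push_cast; ring]
      rw [Complex.cpow_def_of_ne_zero hb0, ← Complex.ofReal_log (haj j).le, Real.log_pow]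
      rw [hzdef, ← Complex.exp_nat_mul]
      congr 1
      push_cast
      ring
    rw [← hz]
    ring
  constructor
  · have h1 : mellinT (mellinDiff α c h f) s = ∫ x in Set.Ioi (0:ℝ), ∑' j, F j x := by
      unfold mellinT
      exact setIntegral_congr_fun measurableSet_Ioi (fun x _ => hpt x)
    rw [h1, ← hfub]
    calc ∑' j, (∫ x : ℝ, F j x ∂(volume.restrict (Set.Ioi 0)))
        = ∑' j, mellinCoef α j * z ^ j * mellinT f s := tsum_congr hterm
      _ = (∑' j, mellinCoef α j * z ^ j) * mellinT f s := tsum_mul_right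
      _ = PhiF α z * mellinT f s := rfl
  · have hi := integrable_tsum_osin hint hsum'
    exact hi.congr (Filter.Eventually.of_forall fun x => (hpt x).symm)

lemma cpow_h_sub_one {α : ℝ} {h : ℝ} (hh : h ∈ Set.Ioo (0:ℝ) 1) :
    ((h : ℂ) - 1) ^ (α : ℂ) = (((1 - h) ^ α : ℝ) : ℂ) * Ecst α := by
  have h1 : (0:ℝ) < 1 - h := by linarith [hh.2]
  have hne : (h : ℂ) - 1 ≠ 0 := by
    rw [sub_ne_zero]
    intro hc
    have : h = 1 := by exact_mod_cast hc
    exact (ne_of_lt hh.2) this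
  rw [Complex.cpow_def_of_ne_zero hne]
  have hlog : Complex.log ((h : ℂ) - 1) = ((Real.log (1 - h) : ℝ) : ℂ) + Real.pi * Complex.I := by
    rw [show (h : ℂ) - 1 = ((1 - h : ℝ) : ℂ) * (-1) by push_cast; ring]
    rw [Complex.log_ofReal_mul h1 (by norm_num), Complex.log_neg_one]
  rw [hlog, add_mul, Complex.exp_add]
  congr 1
  · rw [show ((Real.log (1 - h) : ℝ) : ℂ) * (α : ℂ) = ((Real.log (1 - h) * α : ℝ) : ℂ) by
      push_cast; ring]
    rw [← Complex.ofReal_exp, Real.rpow_def_of_pos h1]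
  · unfold Ecst
    congr 1
    ring

lemma cpow_real_mul {r : ℝ} (hr : 0 < r) (w : ℂ) {β : ℂ} (hβ : β ≠ 0) :
    ((r : ℂ) * w) ^ β = ((r : ℂ)) ^ β * w ^ β := by
  by_cases hw : w = 0
  · rw [hw, mul_zero, Complex.zero_cpow hβ, mul_zero]
  have hr0 : (r : ℂ) ≠ 0 := by exact_mod_cast hr.ne'
  rw [Complex.cpow_def_of_ne_zero (mul_ne_zero hr0 hw), Complex.cpow_def_of_ne_zero hr0,
    Complex.cpow_def_of_ne_zero hw, Complex.log_ofReal_mul hr hw, add_mul, Complex.exp_add,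
    ← Complex.ofReal_log hr.le]

lemma symbol_ratio {α : ℝ} (hα : 0 < α) (t : ℝ) {h : ℝ} (hh : h ∈ Set.Ioo (0:ℝ) 1) :
    PhiF α (Complex.exp (((-(t * Real.log h) : ℝ) : ℂ) * Complex.I)) / ((h : ℂ) - 1) ^ (α : ℂ)
      = ((Complex.exp (((-(t * Real.log h) : ℝ) : ℂ) * Complex.I) - 1) / ((h : ℂ) - 1)) ^ (α : ℂ) := by
  have hα' : (α : ℂ) ≠ 0 := by exact_mod_cast hα.ne'
  have h1 : (0:ℝ) < 1 - h := by linarith [hh.2]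
  set z : ℂ := Complex.exp (((-(t * Real.log h) : ℝ) : ℂ) * Complex.I) with hzdef
  have habs : ‖z‖ ≤ 1 := by
    rw [hzdef, Complex.norm_exp]
    have : (((-(t * Real.log h) : ℝ) : ℂ) * Complex.I).re = 0 := by
      simp [Complex.mul_re]
    rw [this, Real.exp_zero]
  rw [PhiF_eq hα habs, cpow_h_sub_one hh]
  rw [mul_comm ((((1 - h) ^ α : ℝ) : ℂ)) (Ecst α), mul_div_mul_left _ _ (Ecst_ne_zero α)]
  have hq : (z - 1) / ((h : ℂ) - 1) = (((1 - h : ℝ)⁻¹ : ℝ) : ℂ) * (1 - z) := by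
    rw [show (h : ℂ) - 1 = -(((1 - h : ℝ) : ℝ) : ℂ) by push_cast; ring,
      show z - 1 = -(1 - z) by ring, neg_div_neg_eq]
    push_cast
    field_simp
  rw [hq, cpow_real_mul (by positivity : (0:ℝ) < (1 - h)⁻¹) (1 - z) hα']
  rw [← Complex.ofReal_cpow (by positivity : (0:ℝ) ≤ (1 - h)⁻¹) α,
    Real.inv_rpow h1.le α]
  rw [Complex.ofReal_inv]
  field_simp

lemma symbol_tendsto {α : ℝ} (hα : 0 < α) (t : ℝ) :
    Tendsto (fun h : ℝ =>
        PhiF α (Complex.exp (((-(t * Real.log h) : ℝ) : ℂ) * Complex.I)) /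
          ((h : ℂ) - 1) ^ (α : ℂ))
      (nhdsWithin 1 (Set.Ioo (0:ℝ) 1)) (nhds ((-(t : ℂ) * Complex.I) ^ (α : ℂ))) := by
  have hα' : (α : ℂ) ≠ 0 := by exact_mod_cast hα.ne'
  have hev : ∀ᶠ h : ℝ in nhdsWithin 1 (Set.Ioo (0:ℝ) 1), h ∈ Set.Ioo (0:ℝ) 1 :=
    self_mem_nhdsWithin
  have hevQ : ∀ᶠ h : ℝ in nhdsWithin 1 (Set.Ioo (0:ℝ) 1),
      ((Complex.exp (((-(t * Real.log h) : ℝ) : ℂ) * Complex.I) - 1) / ((h : ℂ) - 1)) ^ (α : ℂ)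
        = PhiF α (Complex.exp (((-(t * Real.log h) : ℝ) : ℂ) * Complex.I)) /
            ((h : ℂ) - 1) ^ (α : ℂ) := by
    filter_upwards [hev] with h hh
    exact (symbol_ratio hα t hh).symm
  by_cases ht : t = 0
  · subst ht
    apply Tendsto.congr' hevQ
    have hc : ∀ h : ℝ,
        ((Complex.exp (((-(0 * Real.log h) : ℝ) : ℂ) * Complex.I) - 1) / ((h : ℂ) - 1)) ^ (α : ℂ)
          = 0 := by
      intro h
      rw [show ((-(0 * Real.log h) : ℝ) : ℂ) = 0 by norm_num, zero_mul, Complex.exp_zero]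
      rw [sub_self, zero_div, Complex.zero_cpow hα']
    rw [show (-((0:ℝ) : ℂ) * Complex.I) ^ (α : ℂ) = 0 by
      rw [show -((0:ℝ) : ℂ) * Complex.I = 0 by push_cast; ring, Complex.zero_cpow hα']]
    simp only [hc]
    exact tendsto_const_nhds
  -- t ≠ 0
  have hQlim : Tendsto (fun h : ℝ =>
      (Complex.exp (((-(t * Real.log h) : ℝ) : ℂ) * Complex.I) - 1) / ((h : ℂ) - 1))
      (nhdsWithin 1 (Set.Ioo (0:ℝ) 1)) (nhds (-(t : ℂ) * Complex.I)) := by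
    set u : ℝ → ℂ := fun h => ((-(t * Real.log h) : ℝ) : ℂ) * Complex.I with hudef
    have hlog : Tendsto (fun h : ℝ => Real.log h / (h - 1))
        (nhdsWithin 1 {x : ℝ | x ≠ 1}) (nhds 1) := by
      have hd := Real.hasDerivAt_log one_ne_zero
      rw [hasDerivAt_iff_tendsto_slope] at hd
      have heq : ∀ h : ℝ, slope Real.log 1 h = Real.log h / (h - 1) := by
        intro h
        rw [slope_def_field, Real.log_one, sub_zero]
      rw [inv_one] at hd
      exact hd.congr heq
    have hlog' : Tendsto (fun h : ℝ => Real.log h / (h - 1))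
        (nhdsWithin 1 (Set.Ioo (0:ℝ) 1)) (nhds 1) :=
      hlog.mono_left (nhdsWithin_mono _ (fun x hx => ne_of_lt hx.2))
    have hBlim : Tendsto (fun h : ℝ => u h / ((h : ℂ) - 1))
        (nhdsWithin 1 (Set.Ioo (0:ℝ) 1)) (nhds (-(t : ℂ) * Complex.I)) := by
      have hr : Tendsto (fun h : ℝ => -(t * (Real.log h / (h - 1))))
          (nhdsWithin 1 (Set.Ioo (0:ℝ) 1)) (nhds (-(t * 1))) := (hlog'.const_mul t).neg
      have hr2 := ((Complex.continuous_ofReal.tendsto _).comp hr).mul_const Complex.I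
      have heqv : ∀ᶠ h : ℝ in nhdsWithin 1 (Set.Ioo (0:ℝ) 1),
          ((-(t * (Real.log h / (h - 1))) : ℝ) : ℂ) * Complex.I = u h / ((h : ℂ) - 1) := by
        filter_upwards [hev] with h hh
        have hne : (h : ℝ) - 1 ≠ 0 := by
          intro hc
          have : h = 1 := by linarith
          exact (ne_of_lt hh.2) this
        rw [hudef]
        dsimp only
        rw [show (-(t * (Real.log h / (h - 1))) : ℝ) = -(t * Real.log h) / (h - 1) by
          field_simp]
        rw [Complex.ofReal_div]
        rw [show ((h : ℂ) - 1) = (((h - 1 : ℝ)) : ℂ) by push_cast; ring]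
        ring
      have := hr2.congr' heqv
      rw [show ((-(t * 1) : ℝ) : ℂ) * Complex.I = -(t : ℂ) * Complex.I by push_cast; ring] at this
      exact this
    have hexp : Tendsto (fun w : ℂ => (Complex.exp w - 1) / w)
        (nhdsWithin 0 {w : ℂ | w ≠ 0}) (nhds 1) := by
      have hd := Complex.hasDerivAt_exp 0
      rw [hasDerivAt_iff_tendsto_slope] at hd
      rw [Complex.exp_zero] at hd
      have heq : ∀ w : ℂ, slope Complex.exp 0 w = (Complex.exp w - 1) / w := by
        intro w
        rw [slope_def_field, Complex.exp_zero, sub_zero]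
      exact hd.congr heq
    have huin : Tendsto u (nhdsWithin 1 (Set.Ioo (0:ℝ) 1)) (nhdsWithin 0 {w : ℂ | w ≠ 0}) := by
      rw [tendsto_nhdsWithin_iff]
      constructor
      · have hlog1 : Tendsto (fun h : ℝ => Real.log h) (nhds 1) (nhds 0) := by
          have := (Real.continuousAt_log one_ne_zero).tendsto
          rwa [Real.log_one] at this
        have h2 : Tendsto (fun h : ℝ => -(t * Real.log h)) (nhds 1) (nhds (-(t * 0))) :=
          (hlog1.const_mul t).neg
        have h3 := ((Complex.continuous_ofReal.tendsto _).comp h2).mul_const Complex.I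
        rw [show ((-(t * 0) : ℝ) : ℂ) * Complex.I = 0 by push_cast; ring] at h3
        exact (h3.mono_left nhdsWithin_le_nhds)
      · filter_upwards [hev] with h hh
        have hlogne : Real.log h ≠ 0 := ne_of_lt (Real.log_neg hh.1 hh.2)
        show u h ≠ 0
        rw [hudef]
        dsimp only
        apply mul_ne_zero _ Complex.I_ne_zero
        rw [Complex.ofReal_ne_zero]
        exact neg_ne_zero.mpr (mul_ne_zero ht hlogne)
    have hA := hexp.comp huin
    have hprod := hA.mul hBlim
    rw [one_mul] at hprod
    apply hprod.congr'
    filter_upwards [hev] with h hh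
    have hlogne : Real.log h ≠ 0 := ne_of_lt (Real.log_neg hh.1 hh.2)
    have hu0 : u h ≠ 0 := by
      rw [hudef]
      dsimp only
      apply mul_ne_zero _ Complex.I_ne_zero
      rw [Complex.ofReal_ne_zero]
      exact neg_ne_zero.mpr (mul_ne_zero ht hlogne)
    show (Complex.exp (u h) - 1) / u h * (u h / ((h : ℂ) - 1)) = _
    rw [div_mul_div_comm, mul_comm (u h) ((h:ℂ)-1), ← div_mul_div_comm,
      div_self hu0, mul_one]
  have hcont := (continuousAt_cpow_const (b := (α : ℂ))
    (show -(t : ℂ) * Complex.I ∈ Complex.slitPlane by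
      rw [Complex.mem_slitPlane_iff]
      right
      simp [ht])).tendsto
  have := hcont.comp hQlim
  exact this.congr' hevQ

/-- If g = s-Θ_c^α f is the strong fractional Mellin derivative of f of order α in X_c,
then M[g](c+it) = (−it)^α M[f](c+it). -/
theorem stmt3 (α c : ℝ) (hα : 0 < α) (f g : ℝ → ℂ)
    (hmeasf : Measurable f) (hmeasg : Measurable g)
    (hf : memXc c f) (hg : memXc c g)
    (hstrong : Tendsto
      (fun h : ℝ => ∫ x in Set.Ioi (0 : ℝ),
        x ^ (c - 1) *
          ‖mellinDiff α c h f x / ((h : ℂ) - 1) ^ (α : ℂ) - g x‖)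
      (nhdsWithin (1 : ℝ) {h : ℝ | 0 < h ∧ h ≠ 1}) (nhds 0)) :
    ∀ t : ℝ,
      mellinT g ((c : ℂ) + (t : ℂ) * Complex.I)
        = (-(t : ℂ) * Complex.I) ^ (α : ℂ) *
          mellinT f ((c : ℂ) + (t : ℂ) * Complex.I) := by
  intro t
  set s : ℂ := (c : ℂ) + (t : ℂ) * Complex.I with hsdef
  haveI hne : (nhdsWithin (1:ℝ) (Set.Ioo (0:ℝ) 1)).NeBot := by
    apply mem_closure_iff_nhdsWithin_neBot.mp
    rw [closure_Ioo (by norm_num : (0:ℝ) ≠ 1)]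
    exact ⟨zero_le_one, le_refl 1⟩
  have hsub : Set.Ioo (0:ℝ) 1 ⊆ {h : ℝ | 0 < h ∧ h ≠ 1} :=
    fun x hx => ⟨hx.1, ne_of_lt hx.2⟩
  have hN : Tendsto (fun h : ℝ => ∫ x in Set.Ioi (0 : ℝ), x ^ (c - 1) *
      ‖mellinDiff α c h f x / ((h : ℂ) - 1) ^ (α : ℂ) - g x‖)
      (nhdsWithin 1 (Set.Ioo (0:ℝ) 1)) (nhds 0) :=
    hstrong.mono_left (nhdsWithin_mono _ hsub)
  have hkey : ∀ h ∈ Set.Ioo (0:ℝ) 1,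
      ‖PhiF α (Complex.exp (((-(t * Real.log h) : ℝ) : ℂ) * Complex.I)) * mellinT f s /
          ((h : ℂ) - 1) ^ (α : ℂ) - mellinT g s‖ ≤
        ∫ x in Set.Ioi (0 : ℝ), x ^ (c - 1) *
          ‖mellinDiff α c h f x / ((h : ℂ) - 1) ^ (α : ℂ) - g x‖ := by
    intro h hh
    obtain ⟨hmel, hintΔ⟩ := mellinT_mellinDiff hα f hmeasf hf hh.1 t
    rw [← hsdef] at hmel hintΔ
    rw [← hmel]
    have hgint := integrableOn_cpow_mul t g hmeasg hg
    rw [← hsdef] at hgint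
    have hΔdiv : IntegrableOn
        (fun x : ℝ => ((x : ℂ) ^ (s - 1) * mellinDiff α c h f x) / ((h : ℂ) - 1) ^ (α : ℂ))
        (Set.Ioi 0) := hintΔ.div_const _
    have split : mellinT (mellinDiff α c h f) s / ((h : ℂ) - 1) ^ (α : ℂ) - mellinT g s =
        ∫ x in Set.Ioi (0:ℝ),
          (x : ℂ) ^ (s - 1) * (mellinDiff α c h f x / ((h : ℂ) - 1) ^ (α : ℂ) - g x) := by
      unfold mellinT
      rw [← MeasureTheory.integral_div, ← MeasureTheory.integral_sub hΔdiv hgint]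
      apply setIntegral_congr_fun measurableSet_Ioi
      intro x hx
      dsimp only
      ring
    rw [split]
    calc ‖∫ x in Set.Ioi (0:ℝ),
          (x : ℂ) ^ (s - 1) * (mellinDiff α c h f x / ((h : ℂ) - 1) ^ (α : ℂ) - g x)‖
        ≤ ∫ x in Set.Ioi (0:ℝ),
            ‖(x : ℂ) ^ (s - 1) * (mellinDiff α c h f x / ((h : ℂ) - 1) ^ (α : ℂ) - g x)‖ :=
          norm_integral_le_integral_norm _
      _ = ∫ x in Set.Ioi (0:ℝ), x ^ (c - 1) *
            ‖mellinDiff α c h f x / ((h : ℂ) - 1) ^ (α : ℂ) - g x‖ := by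
          apply setIntegral_congr_fun measurableSet_Ioi
          intro x hx
          dsimp only
          rw [norm_mul, Complex.norm_cpow_eq_rpow_re_of_pos hx]
          congr 2
          rw [hsdef]
          simp
  have hB1 : Tendsto (fun h : ℝ =>
      PhiF α (Complex.exp (((-(t * Real.log h) : ℝ) : ℂ) * Complex.I)) * mellinT f s /
        ((h : ℂ) - 1) ^ (α : ℂ))
      (nhdsWithin 1 (Set.Ioo (0:ℝ) 1)) (nhds (mellinT g s)) := by
    have h0 : Tendsto (fun h : ℝ =>
        PhiF α (Complex.exp (((-(t * Real.log h) : ℝ) : ℂ) * Complex.I)) * mellinT f s /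
          ((h : ℂ) - 1) ^ (α : ℂ) - mellinT g s)
        (nhdsWithin 1 (Set.Ioo (0:ℝ) 1)) (nhds 0) := by
      apply squeeze_zero_norm' ?_ hN
      filter_upwards [self_mem_nhdsWithin] with h hh
      exact hkey h hh
    have h1 := h0.add (tendsto_const_nhds (x := mellinT g s))
    rw [zero_add] at h1
    apply h1.congr
    intro h
    ring
  have hB2 := (symbol_tendsto hα t).mul_const (mellinT f s)
  have hB2' : Tendsto (fun h : ℝ =>
      PhiF α (Complex.exp (((-(t * Real.log h) : ℝ) : ℂ) * Complex.I)) * mellinT f s /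
        ((h : ℂ) - 1) ^ (α : ℂ))
      (nhdsWithin 1 (Set.Ioo (0:ℝ) 1))
      (nhds ((-(t : ℂ) * Complex.I) ^ (α : ℂ) * mellinT f s)) := by
    apply hB2.congr
    intro h
    ring
  exact tendsto_nhds_unique hB1 hB2'
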